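/- arXiv:1312.1149 — 2 statements merged into one kernel-verified Lean document; each statement's English description precedes it below -/
import Mathlib

section
/- With the notation of the symmetric Jacobi matrix J_{2n}: if λ satisfies (λ − α_1 + √w_0)·det(E_2) − w_1·det(E_3) = 0, then the vector v with v_j = det(E_{n-j+2})/√(w_{n-j+1}⋯w_{n-1}) for j = 1,…,n and v_{2n+1-j} = −v_j for j = 1,…,n is an eigenvector of J_{2n} with eigenvalue λ. -/
/-- The `2n × 2n` mirror-symmetric Jacobi matrix with diagonal
`(α_n, …, α_1, α_1, …, α_n)` and off-diagonal couplings
`(√w_{n-1}, …, √w_1, √w_0, √w_1, …, √w_{n-1})` (0-based indices). -/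
noncomputable def Jmat (α w : ℕ → ℝ) (n : ℕ) : Matrix (Fin (2*n)) (Fin (2*n)) ℝ :=
  Matrix.of fun i j =>
    if i.1 = j.1 then (if i.1 ≤ n - 1 then α (n - i.1) else α (i.1 - n + 1))
    else if i.1 + 1 = j.1 ∨ j.1 + 1 = i.1 then
      Real.sqrt (w (((n : ℤ) - 1 - (min i.1 j.1 : ℤ)).natAbs))
    else 0

/-- The `(n-k+1) × (n-k+1)` tridiagonal matrix `E_k` with diagonal
`(λ-α_n, λ-α_{n-1}, …, λ-α_k)` and off-diagonal entries `(-√w_{n-1}, …, -√w_k)`. -/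
noncomputable def Emat (lam : ℝ) (α w : ℕ → ℝ) (n k : ℕ) : Matrix (Fin (n + 1 - k)) (Fin (n + 1 - k)) ℝ :=
  Matrix.of fun i j =>
    if i.1 = j.1 then lam - α (n - i.1)
    else if i.1 + 1 = j.1 ∨ j.1 + 1 = i.1 then -Real.sqrt (w (n - 1 - min i.1 j.1))
    else 0


/-- The candidate eigenvector of `J_{2n}`: components
`v_j = det(E_{n-j+2}) / √(w_{n-j+1} ⋯ w_{n-1})` for `j = 1, …, n` (here 0-based),
reflected with sign `s` on the second half. -/
noncomputable def vsym (lam : ℝ) (α w : ℕ → ℝ) (n : ℕ) (s : ℝ) : Fin (2*n) → ℝ := fun j =>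
  if j.1 < n then
    (Emat lam α w n (n - j.1 + 1)).det / Real.sqrt (∏ m ∈ Finset.Ico (n - j.1) n, w m)
  else
    s * ((Emat lam α w n (n - (2*n - 1 - j.1) + 1)).det /
      Real.sqrt (∏ m ∈ Finset.Ico (n - (2*n - 1 - j.1)) n, w m))

section Aux

private lemma sum_two_aux {N : ℕ} (f : Fin N → ℝ) (a b : Fin N) (hab : a ≠ b)
    (h : ∀ k, k ≠ a → k ≠ b → f k = 0) : ∑ k, f k = f a + f b := by
  have key : ∀ k : Fin N, f k = (if k = a then f a else 0) + (if k = b then f b else 0) := by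
    intro k
    by_cases h1 : k = a
    · subst h1; simp [hab]
    · by_cases h2 : k = b
      · subst h2; simp [h1]
      · simp [h1, h2, h k h1 h2]
  rw [Finset.sum_congr rfl (fun k _ => key k), Finset.sum_add_distrib]
  simp

private lemma sum_three_aux {N : ℕ} (f : Fin N → ℝ) (a b c : Fin N)
    (hab : a ≠ b) (hac : a ≠ c) (hbc : b ≠ c)
    (h : ∀ k, k ≠ a → k ≠ b → k ≠ c → f k = 0) : ∑ k, f k = f a + f b + f c := by
  have key : ∀ k : Fin N, f k = (if k = a then f a else 0) + (if k = b then f b else 0)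
      + (if k = c then f c else 0) := by
    intro k
    by_cases h1 : k = a
    · subst h1; simp [hab, hac]
    · by_cases h2 : k = b
      · subst h2; simp [h1, hbc]
      · by_cases h3 : k = c
        · subst h3; simp [h1, h2]
        · simp [h1, h2, h3, h k h1 h2 h3]
  rw [Finset.sum_congr rfl (fun k _ => key k), Finset.sum_add_distrib, Finset.sum_add_distrib]
  simp

private noncomputable def tri (d e : ℕ → ℝ) (m : ℕ) : Matrix (Fin m) (Fin m) ℝ :=
  Matrix.of fun i j =>
    if i.1 = j.1 then d i.1
    else if i.1 + 1 = j.1 ∨ j.1 + 1 = i.1 then e (min i.1 j.1) else 0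

private lemma tri_apply (d e : ℕ → ℝ) (M : ℕ) (x y : Fin M) :
    tri d e M x y = if x.1 = y.1 then d x.1
      else if x.1 + 1 = y.1 ∨ y.1 + 1 = x.1 then e (min x.1 y.1) else 0 := rfl

private lemma tri_det_rec (d e : ℕ → ℝ) (m : ℕ) :
    (tri d e (m+2)).det = d (m+1) * (tri d e (m+1)).det - e m ^ 2 * (tri d e m).det := by
  have hsub1 : (tri d e (m+2)).submatrix (Fin.last (m+1)).succAbove (Fin.last (m+1)).succAbove
      = tri d e (m+1) := by
    ext i j
    rw [Matrix.submatrix_apply, Fin.succAbove_last, tri_apply, tri_apply]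
    rfl
  set a : Fin (m+2) := ⟨m, by omega⟩ with ha
  set B := (tri d e (m+2)).submatrix (Fin.last (m+1)).succAbove a.succAbove with hB
  have hBsub : B.submatrix (Fin.last m).succAbove (Fin.last m).succAbove = tri d e m := by
    ext i j
    have h1 : ((Fin.last (m+1)).succAbove ((Fin.last m).succAbove i)).1 = i.1 := by
      simp [Fin.succAbove_last]
    have h2 : (a.succAbove ((Fin.last m).succAbove j)).1 = j.1 := by
      have hj := j.2
      simp only [Fin.succAbove_last]
      simp [Fin.succAbove, Fin.lt_def, ha]
    rw [hB, Matrix.submatrix_apply, Matrix.submatrix_apply, tri_apply, tri_apply, h1, h2]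
  have hBdet : B.det = e m * (tri d e m).det := by
    rw [Matrix.det_succ_column B (Fin.last m)]
    rw [Fintype.sum_eq_single (Fin.last m)]
    · have hval : B (Fin.last m) (Fin.last m) = e m := by
        have h2 : (a.succAbove (Fin.last m)).1 = m + 1 := by
          simp [Fin.succAbove, Fin.lt_def, ha]
        have h1 : ((Fin.last (m+1)).succAbove (Fin.last m)).1 = m := by
          simp [Fin.succAbove_last]
        rw [hB, Matrix.submatrix_apply, tri_apply, h1, h2]
        rw [if_neg (by omega), if_pos (by omega)]
        congr 1; omega
      rw [hval, hBsub]
      have : ((-1 : ℝ)) ^ ((Fin.last m).1 + (Fin.last m).1) = 1 :=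
        Even.neg_one_pow ⟨m, rfl⟩
      rw [this]; ring
    · intro x hx
      have hxm : x.1 < m := by
        have := x.2
        rcases Nat.lt_or_ge x.1 m with h | h
        · exact h
        · exfalso; exact hx (Fin.ext (by simp only [Fin.val_last]; omega))
      have h2 : (a.succAbove (Fin.last m)).1 = m + 1 := by
        simp [Fin.succAbove, Fin.lt_def, ha]
      have h1 : ((Fin.last (m+1)).succAbove x).1 = x.1 := by
        simp [Fin.succAbove_last]
      have hz : B x (Fin.last m) = 0 := by
        rw [hB, Matrix.submatrix_apply, tri_apply, h1, h2]
        rw [if_neg (by omega), if_neg (by omega)]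
      rw [hz]; ring
  rw [Matrix.det_succ_row (tri d e (m+2)) (Fin.last (m+1))]
  rw [sum_two_aux _ a (Fin.last (m+1)) (by apply Fin.ne_of_val_ne; simp [ha])
    (by
    intro k hka hkl
    have hk : k.1 < m := by
      have := k.2
      have h1 : k.1 ≠ m := fun h => hka (Fin.ext (by simp [ha, h]))
      have h2 : k.1 ≠ m + 1 := fun h => hkl (Fin.ext (by simp [h]))
      omega
    have hz : tri d e (m+2) (Fin.last (m+1)) k = 0 := by
      rw [tri_apply]
      rw [if_neg (by have := k.2; simp; omega), if_neg (by have := k.2; simp; omega)]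
    rw [hz]; ring)]
  have hvala : tri d e (m+2) (Fin.last (m+1)) a = e m := by
    rw [tri_apply]
    rw [if_neg (by simp [ha]), if_pos (by simp [ha])]
    simp [ha]
  have hvall : tri d e (m+2) (Fin.last (m+1)) (Fin.last (m+1)) = d (m+1) := by
    rw [tri_apply, if_pos rfl]
    simp
  rw [hvala, hvall, hsub1, ← hB, hBdet]
  have s1 : ((-1 : ℝ)) ^ ((Fin.last (m+1)).1 + a.1) = -1 := by
    have : (Fin.last (m+1)).1 + a.1 = 2*m+1 := by simp [ha]; omega
    rw [this]; exact Odd.neg_one_pow ⟨m, by omega⟩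
  have s2 : ((-1 : ℝ)) ^ ((Fin.last (m+1)).1 + (Fin.last (m+1)).1) = 1 :=
    Even.neg_one_pow ⟨m+1, rfl⟩
  rw [s1, s2]; ring

private lemma Emat_eq_tri (lam : ℝ) (α w : ℕ → ℝ) (n k : ℕ) :
    Emat lam α w n k
      = tri (fun i => lam - α (n - i)) (fun i => -Real.sqrt (w (n - 1 - i))) (n + 1 - k) := rfl

private lemma Emat_det_rec (lam : ℝ) (α w : ℕ → ℝ) (n : ℕ) (hw : ∀ i, i < n → 0 < w i)
    (k : ℕ) (hk1 : 1 ≤ k) (hk2 : k ≤ n - 1) :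
    (Emat lam α w n k).det = (lam - α k) * (Emat lam α w n (k+1)).det
      - w k * (Emat lam α w n (k+2)).det := by
  obtain ⟨m, hm⟩ : ∃ m, n + 1 - k = m + 2 := ⟨n - 1 - k, by omega⟩
  have h1 : n + 1 - (k+1) = m + 1 := by omega
  have h2 : n + 1 - (k+2) = m := by omega
  rw [Emat_eq_tri, Emat_eq_tri, Emat_eq_tri, hm, h1, h2, tri_det_rec]
  have e1 : n - (m+1) = k := by omega
  have e2 : n - 1 - m = k := by omega
  rw [e1, e2, neg_pow, Real.sq_sqrt (hw k (by omega)).le]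
  ring

private lemma Emat_det_top (lam : ℝ) (α w : ℕ → ℝ) (n : ℕ) :
    (Emat lam α w n (n+1)).det = 1 := by
  rw [Emat_eq_tri, show n + 1 - (n+1) = 0 from by omega, Matrix.det_fin_zero]

private lemma Emat_det_n (lam : ℝ) (α w : ℕ → ℝ) (n : ℕ) :
    (Emat lam α w n n).det = lam - α n := by
  rw [Emat_eq_tri, show n + 1 - n = 1 from by omega, Matrix.det_fin_one]
  simp [tri]

private lemma Jmat_apply (α w : ℕ → ℝ) (n : ℕ) (i j : Fin (2*n)) :
    Jmat α w n i j =
    if i.1 = j.1 then (if i.1 ≤ n - 1 then α (n - i.1) else α (i.1 - n + 1))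
    else if i.1 + 1 = j.1 ∨ j.1 + 1 = i.1 then
      Real.sqrt (w (((n : ℤ) - 1 - (min i.1 j.1 : ℤ)).natAbs))
    else 0 := rfl

private lemma Jmat_diag (α w : ℕ → ℝ) (n : ℕ) (i : Fin (2*n)) (hi : i.1 < n) :
    Jmat α w n i i = α (n - i.1) := by
  rw [Jmat_apply, if_pos rfl, if_pos (by omega)]

private lemma Jmat_right (α w : ℕ → ℝ) (n : ℕ) (i k : Fin (2*n))
    (hik : i.1 + 1 = k.1) (hi : i.1 < n) :
    Jmat α w n i k = Real.sqrt (w (n - 1 - i.1)) := by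
  rw [Jmat_apply, if_neg (by omega), if_pos (Or.inl hik)]
  have h : ((n : ℤ) - 1 - (min i.1 k.1 : ℤ)).natAbs = n - 1 - i.1 := by
    have := k.2; omega
  rw [h]

private lemma Jmat_left (α w : ℕ → ℝ) (n : ℕ) (i k : Fin (2*n))
    (hik : k.1 + 1 = i.1) (hi : i.1 ≤ n) :
    Jmat α w n i k = Real.sqrt (w (n - i.1)) := by
  rw [Jmat_apply, if_neg (by omega), if_pos (Or.inr hik)]
  have h : ((n : ℤ) - 1 - (min i.1 k.1 : ℤ)).natAbs = n - i.1 := by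
    have := k.2; omega
  rw [h]

private lemma Jmat_zero (α w : ℕ → ℝ) (n : ℕ) (i k : Fin (2*n))
    (h1 : i.1 ≠ k.1) (h2 : i.1 + 1 ≠ k.1) (h3 : k.1 + 1 ≠ i.1) :
    Jmat α w n i k = 0 := by
  rw [Jmat_apply, if_neg h1, if_neg (by omega)]

private def mirror (N : ℕ) (k : Fin N) : Fin N := ⟨N - 1 - k.1, by have := k.2; omega⟩

@[simp] private lemma mirror_val (N : ℕ) (k : Fin N) : (mirror N k).1 = N - 1 - k.1 := rfl

private lemma mirror_invol (N : ℕ) : Function.Involutive (mirror N) := by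
  intro k
  apply Fin.ext
  have := k.2
  simp [mirror]
  omega

private lemma Jmat_mirror (α w : ℕ → ℝ) (n : ℕ) (hn : 1 ≤ n) (i k : Fin (2*n)) :
    Jmat α w n (mirror (2*n) i) (mirror (2*n) k) = Jmat α w n i k := by
  have hi := i.2
  have hk := k.2
  rw [Jmat_apply, Jmat_apply, mirror_val, mirror_val]
  by_cases h1 : i.1 = k.1
  · rw [if_pos (by omega), if_pos h1]
    by_cases h2 : i.1 ≤ n - 1
    · rw [if_neg (by omega), if_pos h2]
      congr 1
      omega
    · rw [if_pos (by omega), if_neg h2]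
      congr 1
      omega
  · rw [if_neg (by omega), if_neg h1]
    by_cases h2 : i.1 + 1 = k.1 ∨ k.1 + 1 = i.1
    · rw [if_pos (by omega), if_pos h2]
      have h : ((n : ℤ) - 1 - min ((2*n-1-i.1 : ℕ) : ℤ) ((2*n-1-k.1 : ℕ) : ℤ)).natAbs
          = ((n : ℤ) - 1 - (min i.1 k.1 : ℤ)).natAbs := by omega
      rw [h]
    · rw [if_neg (by omega), if_neg h2]

private noncomputable def Pj (w : ℕ → ℝ) (n j : ℕ) : ℝ := ∏ m ∈ Finset.Ico (n-j) n, w m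

private lemma Pj_pos (w : ℕ → ℝ) (n : ℕ) (hw : ∀ i, i < n → 0 < w i) (j : ℕ) :
    0 < Pj w n j :=
  Finset.prod_pos (fun m hm => hw m (Finset.mem_Ico.mp hm).2)

private lemma Pj_zero (w : ℕ → ℝ) (n : ℕ) : Pj w n 0 = 1 := by simp [Pj]

private lemma sqrt_Pj_succ (w : ℕ → ℝ) (n : ℕ) (hw : ∀ i, i < n → 0 < w i) (j : ℕ)
    (h1 : 1 ≤ j) (h2 : j ≤ n) :
    Real.sqrt (Pj w n j) = Real.sqrt (w (n-j)) * Real.sqrt (Pj w n (j-1)) := by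
  rw [← Real.sqrt_mul (hw (n-j) (by omega)).le]
  congr 1
  rw [Pj, Pj, Finset.prod_eq_prod_Ico_succ_bot (show n - j < n by omega) w,
    show n - j + 1 = n - (j-1) from by omega]

private lemma vsym_lt (lam : ℝ) (α w : ℕ → ℝ) (n : ℕ) (s : ℝ) (j : Fin (2*n)) (hj : j.1 < n) :
    vsym lam α w n s j
      = (Emat lam α w n (n - j.1 + 1)).det / Real.sqrt (Pj w n j.1) := by
  rw [vsym, if_pos hj]; rfl

private lemma vsym_ge (lam : ℝ) (α w : ℕ → ℝ) (n : ℕ) (s : ℝ) (j : Fin (2*n)) (hj : ¬ j.1 < n) :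
    vsym lam α w n s j
      = s * ((Emat lam α w n (n - (2*n - 1 - j.1) + 1)).det
          / Real.sqrt (Pj w n (2*n - 1 - j.1))) := by
  rw [vsym, if_neg hj]; rfl

private lemma row_algebra (a b p c lam D1 D2 : ℝ) (ha : 0 < a) (hb : 0 < b) (hp : 0 < p) :
    a * (D2 / p) + c * (D1 / (a*p)) + b * (((lam - c) * D1 - a^2 * D2) / (b*(a*p)))
      = lam * (D1 / (a*p)) := by
  field_simp
  ring

private lemma row_algebra_last (a b p c lam D2 D3 : ℝ) (ha : 0 < a) (hp : 0 < p)
    (hcond : (lam - c + b) * D2 - a^2 * D3 = 0) :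
    a * (D3 / p) + c * (D2 / (a*p)) + b * (-1 * (D2 / (a*p))) = lam * (D2 / (a*p)) := by
  have ha' : a ≠ 0 := ha.ne'
  have hp' : p ≠ 0 := hp.ne'
  field_simp
  linear_combination (-1) * hcond

end Aux

/-- If `λ` satisfies `(λ - α_1 + √w_0)·det(E_2) - w_1·det(E_3) = 0`, then the antisymmetric
vector `v` is an eigenvector of `J_{2n}` with eigenvalue `λ`. -/
theorem eigenvector_antisymmetric_branch
    (n : ℕ) (hn : 2 ≤ n) (α w : ℕ → ℝ) (hw : ∀ i, i < n → 0 < w i) (lam : ℝ)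
    (hcond : (lam - α 1 + Real.sqrt (w 0)) * (Emat lam α w n 2).det
        - w 1 * (Emat lam α w n 3).det = 0) :
    vsym lam α w n (-1) ≠ 0 ∧
    (Jmat α w n).mulVec (vsym lam α w n (-1)) = lam • vsym lam α w n (-1) := by
  have hn0 : 0 < n := by omega
  set vv := vsym lam α w n (-1) with hvv
  have hPp : ∀ j, 0 < Pj w n j := Pj_pos w n hw
  have hsPp : ∀ j, 0 < Real.sqrt (Pj w n j) := fun j => Real.sqrt_pos.mpr (hPp j)
  -- value at 0
  have hv0 : vv ⟨0, by omega⟩ = 1 := by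
    rw [hvv, vsym_lt lam α w n (-1) ⟨0, by omega⟩ (by simpa using hn0)]
    rw [show ((⟨0, by omega⟩ : Fin (2*n))).1 = 0 from rfl, Nat.sub_zero, Emat_det_top,
      Pj_zero, Real.sqrt_one]
    norm_num
  constructor
  · intro h0
    have := congrFun h0 ⟨0, by omega⟩
    rw [hv0] at this
    exact one_ne_zero this
  -- the eigenvalue equation
  have hmulVec : ∀ x : Fin (2*n), (Jmat α w n).mulVec vv x = ∑ k, Jmat α w n x k * vv k := by
    intro x
    simp [Matrix.mulVec, dotProduct]
  have hrow : ∀ i : Fin (2*n), i.1 < n → (Jmat α w n).mulVec vv i = lam * vv i := by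
    intro i hi
    rw [hmulVec]
    by_cases hi0 : i.1 = 0
    -- row 0
    · have h1n : (1 : ℕ) < 2*n := by omega
      rw [sum_two_aux _ i ⟨1, h1n⟩ (Fin.ne_of_val_ne (show i.1 ≠ 1 by omega))
        (by
          intro k hki hk1
          have hv2 : k.1 ≠ i.1 := fun h => hki (Fin.ext h)
          have hv1 : k.1 ≠ 1 := fun h => hk1 (Fin.ext h)
          rw [Jmat_zero α w n i k (Ne.symm hv2) (by omega) (by omega)]
          ring)]
      rw [Jmat_diag α w n i hi, Jmat_right α w n i ⟨1, h1n⟩ (show i.1 + 1 = 1 by omega) hi]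
      rw [hvv, vsym_lt lam α w n (-1) i hi,
        vsym_lt lam α w n (-1) ⟨1, h1n⟩ (show (1:ℕ) < n by omega)]
      rw [show ((⟨1, h1n⟩ : Fin (2*n))).1 = 1 from rfl, hi0]
      rw [Nat.sub_zero, Emat_det_top, Pj_zero, Real.sqrt_one,
        show n - 1 + 1 = n from by omega, Emat_det_n]
      rw [sqrt_Pj_succ w n hw 1 le_rfl (by omega),
        show (1:ℕ) - 1 = 0 from rfl, Pj_zero, Real.sqrt_one]
      have hs := Real.sqrt_pos.mpr (hw (n-1) (by omega))
      field_simp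
      simp only [Nat.sub_zero]
      ring
    -- rows ≥ 1
    · have hi1 : 1 ≤ i.1 := by omega
      have hkm : i.1 - 1 < 2*n := by omega
      have hkp : i.1 + 1 < 2*n := by omega
      rw [sum_three_aux _ ⟨i.1 - 1, hkm⟩ i ⟨i.1 + 1, hkp⟩
        (Fin.ne_of_val_ne (show i.1 - 1 ≠ i.1 by omega))
        (Fin.ne_of_val_ne (show i.1 - 1 ≠ i.1 + 1 by omega))
        (Fin.ne_of_val_ne (show i.1 ≠ i.1 + 1 by omega))
        (by
          intro k h1 h2 h3
          have hv1 : k.1 ≠ i.1 - 1 := fun h => h1 (Fin.ext (by simpa using h))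
          have hv2 : k.1 ≠ i.1 := fun h => h2 (Fin.ext (by simpa using h))
          have hv3 : k.1 ≠ i.1 + 1 := fun h => h3 (Fin.ext (by simpa using h))
          rw [Jmat_zero α w n i k (Ne.symm hv2) (fun h => hv3 h.symm) (by omega)]
          ring)]
      rw [Jmat_diag α w n i hi,
        Jmat_left α w n i ⟨i.1 - 1, hkm⟩ (show i.1 - 1 + 1 = i.1 by omega) (by omega),
        Jmat_right α w n i ⟨i.1 + 1, hkp⟩ (show i.1 + 1 = i.1 + 1 from rfl) hi]
      by_cases hin : i.1 = n - 1
      -- row n-1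
      · rw [hvv, vsym_lt lam α w n (-1) ⟨i.1 - 1, hkm⟩ (show i.1 - 1 < n by omega),
          vsym_lt lam α w n (-1) i hi,
          vsym_ge lam α w n (-1) ⟨i.1 + 1, hkp⟩ (show ¬ (i.1 + 1 < n) by omega)]
        rw [show ((⟨i.1 - 1, hkm⟩ : Fin (2*n))).1 = i.1 - 1 from rfl,
          show ((⟨i.1 + 1, hkp⟩ : Fin (2*n))).1 = i.1 + 1 from rfl]
        rw [show n - (i.1 - 1) + 1 = 3 from by omega,
          show n - i.1 + 1 = 2 from by omega,
          show 2*n - 1 - (i.1 + 1) = n - 1 from by omega,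
          show n - (n-1) + 1 = 2 from by omega,
          show i.1 - 1 = n - 2 from by omega,
          show i.1 = n - 1 from hin,
          show n - (n-1) = 1 from by omega,
          show n - 1 - (n-1) = 0 from by omega]
        rw [sqrt_Pj_succ w n hw (n-1) (by omega) (by omega),
          show n - (n-1) = 1 from by omega, show n - 1 - 1 = n - 2 from by omega]
        exact row_algebra_last _ _ _ _ _ _ _
          (Real.sqrt_pos.mpr (hw 1 (by omega))) (hsPp (n-2))
          (by rw [← Real.sq_sqrt (hw 1 (by omega)).le] at hcond; exact hcond)
      -- interior rows
      · have hin2 : i.1 ≤ n - 2 := by omega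
        rw [hvv, vsym_lt lam α w n (-1) ⟨i.1 - 1, hkm⟩ (show i.1 - 1 < n by omega),
          vsym_lt lam α w n (-1) i hi,
          vsym_lt lam α w n (-1) ⟨i.1 + 1, hkp⟩ (show i.1 + 1 < n by omega)]
        rw [show ((⟨i.1 - 1, hkm⟩ : Fin (2*n))).1 = i.1 - 1 from rfl,
          show ((⟨i.1 + 1, hkp⟩ : Fin (2*n))).1 = i.1 + 1 from rfl]
        rw [show n - (i.1 - 1) + 1 = (n - i.1) + 2 from by omega,
          show n - i.1 + 1 = (n - i.1) + 1 from rfl,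
          show n - (i.1 + 1) + 1 = n - i.1 from by omega]
        rw [sqrt_Pj_succ w n hw i.1 hi1 (by omega),
          sqrt_Pj_succ w n hw (i.1+1) (by omega) (by omega),
          show i.1 + 1 - 1 = i.1 from by omega,
          show n - (i.1 + 1) = n - 1 - i.1 from by omega]
        rw [sqrt_Pj_succ w n hw i.1 hi1 (by omega)]
        have hrec : (Emat lam α w n (n - i.1)).det
            = (lam - α (n - i.1)) * (Emat lam α w n (n - i.1 + 1)).det
              - (Real.sqrt (w (n - i.1)))^2 * (Emat lam α w n (n - i.1 + 2)).det := by
          rw [Emat_det_rec lam α w n hw (n - i.1) (by omega) (by omega),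
            Real.sq_sqrt (hw (n - i.1) (by omega)).le]
        rw [hrec]
        exact row_algebra _ _ _ _ _ _ _
          (Real.sqrt_pos.mpr (hw (n - i.1) (by omega)))
          (Real.sqrt_pos.mpr (hw (n - 1 - i.1) (by omega)))
          (hsPp (i.1 - 1))
  -- mirror symmetry
  have hmir : ∀ k : Fin (2*n), vv (mirror (2*n) k) = - vv k := by
    intro k
    have hk2 := k.2
    by_cases hk : k.1 < n
    · have h1 : ¬ (mirror (2*n) k).1 < n := by simp; omega
      rw [hvv, vsym_ge lam α w n (-1) _ h1, vsym_lt lam α w n (-1) k hk]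
      rw [mirror_val, show 2*n - 1 - (2*n - 1 - k.1) = k.1 from by omega]
      ring
    · have h1 : (mirror (2*n) k).1 < n := by simp; omega
      rw [hvv, vsym_lt lam α w n (-1) _ h1, vsym_ge lam α w n (-1) k hk]
      rw [mirror_val]
      ring
  funext i
  rw [Pi.smul_apply, smul_eq_mul]
  by_cases hi : i.1 < n
  · exact hrow i hi
  · have hj : (mirror (2*n) i).1 < n := by simp; have := i.2; omega
    have hJv : (Jmat α w n).mulVec vv i
        = - ((Jmat α w n).mulVec vv (mirror (2*n) i)) := by
      rw [hmulVec, hmulVec]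
      calc ∑ k, Jmat α w n i k * vv k
          = ∑ k, -(Jmat α w n (mirror (2*n) i) (mirror (2*n) k) * vv (mirror (2*n) k)) := by
            refine Finset.sum_congr rfl (fun k _ => ?_)
            rw [Jmat_mirror α w n (by omega) i k, hmir k]
            ring
        _ = - ∑ k, Jmat α w n (mirror (2*n) i) (mirror (2*n) k) * vv (mirror (2*n) k) := by
            rw [Finset.sum_neg_distrib]
        _ = - ∑ k, Jmat α w n (mirror (2*n) i) k * vv k := by
            rw [Function.Bijective.sum_comp (mirror_invol (2*n)).bijective
              (fun k => Jmat α w n (mirror (2*n) i) k * vv k)]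
    rw [hJv, hrow (mirror (2*n) i) hj, hmir i]
    ring
end

section
/- The eigenvalues λ of J_{2n}(p) other than ±1 are exactly the solutions of √q·Ũ_{n-1}(λ/√(pq)) + √p·Ũ_{n-2}(λ/√(pq)) = 0 or √q·Ũ_{n-1}(λ/√(pq)) − √p·Ũ_{n-2}(λ/√(pq)) = 0, where Ũ_k denotes the monic Chebyshev polynomial of the second kind. -/
/-- The `2n × 2n` Jacobi matrix `J_{2n}(p)` of the reduced random walk on the path
`P_{2n}`: zero diagonal, couplings `√p` at the extreme positions, `q = 1-p` at the
central position, and `√(pq)` elsewhere (0-based indices). -/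
noncomputable def Jp (p : ℝ) (n : ℕ) : Matrix (Fin (2*n)) (Fin (2*n)) ℝ :=
  Matrix.of fun i j =>
    if i.1 + 1 = j.1 ∨ j.1 + 1 = i.1 then
      (if min i.1 j.1 = 0 ∨ min i.1 j.1 = 2*n - 2 then Real.sqrt p
       else if min i.1 j.1 = n - 1 then 1 - p
       else Real.sqrt (p * (1 - p)))
    else 0

/-- The monic Chebyshev polynomials of the second kind:
`Ũ_0 = 1`, `Ũ_1(x) = x`, `Ũ_k(x) = x·Ũ_{k-1}(x) - Ũ_{k-2}(x)`. -/
noncomputable def Ut : ℕ → ℝ → ℝ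
  | 0, _ => 1
  | 1, x => x
  | (k+2), x => x * Ut (k+1) x - Ut k x

/-- `Ũ` shifted by one: `Ut' k = Ũ_{k-1}` with `Ũ_{-1} = 0`. -/
noncomputable def Ut' (k : ℕ) (x : ℝ) : ℝ := if k = 0 then 0 else Ut (k - 1) x

/-- transfer solution: `wv 0 = 1`, `wv (k+1) = (q x Ũ_k - Ũ_{k-1})/√q` -/
noncomputable def wv (q x : ℝ) : ℕ → ℝ
  | 0 => 1
  | (k+1) => (q * x * Ut k x - Ut' k x) / Real.sqrt q

/-- coupling coefficients of `Jp` -/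
noncomputable def bc (p : ℝ) (n k : ℕ) : ℝ :=
  if k = 0 ∨ k = 2*n - 2 then Real.sqrt p
  else if k = n - 1 then 1 - p
  else Real.sqrt (p * (1 - p))

lemma Ut_succ (k : ℕ) (x : ℝ) : Ut (k+1) x = x * Ut k x - Ut' k x := by
  cases k <;> simp [Ut, Ut']

lemma Ut'_succ (k : ℕ) (x : ℝ) : Ut' (k+1) x = Ut k x := by simp [Ut']

lemma keyalg (P Q x u0 u1 um ε : ℝ) (hPQ : P^2 + Q^2 = 1) (hQ : Q ≠ 0)
    (hε : ε = 1 ∨ ε = -1) (h1 : u1 = x*u0 - um) :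
    P*Q*x * ((Q^2*x*u1 - u0)/Q) - P*Q*((Q^2*x*u0 - um)/Q) - ε*Q^2*((Q^2*x*u1 - u0)/Q)
      = (P*Q*x - ε) * (Q * (x*u1 - u0) + ε * P * u1) := by
  rw [h1]
  rcases hε with rfl | rfl
  · field_simp; linear_combination (2*Q^2*x*um - 2*Q^2*x^2*u0 + Q^2*x^2*u0 - Q^2*x*um + Q*(1-Q)*(x*um - x^2*u0)) * hPQ
  · field_simp; linear_combination (Q^2*x^2*u0 - Q^2*x*um - Q*(1-Q)*(x*um - x^2*u0)) * hPQ

lemma keyalg2 (P Q x ε : ℝ) (hPQ : P^2 + Q^2 = 1) (hQ : Q ≠ 0)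
    (hε : ε = 1 ∨ ε = -1) :
    P*Q*x * ((Q^2*x)/Q) - P - ε*Q^2*((Q^2*x)/Q) = (P*Q*x - ε) * (Q * x + ε * P) := by
  rcases hε with rfl | rfl
  · field_simp; linear_combination (-(Q^2*x) - Q*x*(1-Q)) * hPQ
  · field_simp; linear_combination (Q^2*x + Q*x*(1-Q)) * hPQ

lemma Jp_apply (p : ℝ) (n : ℕ) (i j : Fin (2*n)) :
    Jp p n i j = if i.1 + 1 = j.1 ∨ j.1 + 1 = i.1 then bc p n (min i.1 j.1) else 0 := rfl

lemma row_sum (p : ℝ) (n : ℕ) (v : Fin (2*n) → ℝ) (i : Fin (2*n)) :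
    (Jp p n).mulVec v i =
      (if h : 0 < i.1 then bc p n (i.1-1) * v ⟨i.1-1, by omega⟩ else 0)
      + (if h : i.1+1 < 2*n then bc p n i.1 * v ⟨i.1+1, h⟩ else 0) := by
  have hsplit : ∀ j : Fin (2*n), Jp p n i j * v j =
      (if j.1 + 1 = i.1 then bc p n (i.1-1) * v j else 0)
      + (if i.1 + 1 = j.1 then bc p n i.1 * v j else 0) := by
    intro j
    rw [Jp_apply]
    by_cases hL : j.1 + 1 = i.1
    · have hmin : min i.1 j.1 = i.1 - 1 := by omega
      have hR : ¬ (i.1 + 1 = j.1) := by omega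
      rw [if_pos (Or.inr hL), if_pos hL, if_neg hR, hmin]; ring
    · by_cases hR : i.1 + 1 = j.1
      · have hmin : min i.1 j.1 = i.1 := by omega
        rw [if_pos (Or.inl hR), if_neg hL, if_pos hR, hmin]; ring
      · rw [if_neg (by tauto), if_neg hL, if_neg hR]; ring
  unfold Matrix.mulVec dotProduct
  rw [Finset.sum_congr rfl (fun j _ => hsplit j), Finset.sum_add_distrib]
  congr 1
  · by_cases h : 0 < i.1
    · rw [dif_pos h, Finset.sum_eq_single (⟨i.1-1, by omega⟩ : Fin (2*n))]
      · rw [if_pos (show i.1 - 1 + 1 = i.1 by omega)]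
      · intro b _ hb
        rw [if_neg]
        intro hc
        exact hb (Fin.ext (show b.1 = i.1 - 1 by omega))
      · simp
    · rw [dif_neg h, Finset.sum_eq_zero]
      intro j _
      rw [if_neg (by omega)]
  · by_cases h : i.1 + 1 < 2*n
    · rw [dif_pos h, Finset.sum_eq_single (⟨i.1+1, h⟩ : Fin (2*n))]
      · rw [if_pos (show i.1 + 1 = i.1 + 1 from rfl)]
      · intro b _ hb
        rw [if_neg]
        intro hc
        exact hb (Fin.ext (show b.1 = i.1 + 1 from hc.symm))
      · simp
    · rw [dif_neg h, Finset.sum_eq_zero]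
      intro j _
      rw [if_neg (by omega)]

/-- scalar (ℕ-indexed) reformulation of the eigenvalue equation -/
lemma eig_iff_scalar (p lam : ℝ) (n : ℕ) (hn : 1 ≤ n) :
    (∃ v : Fin (2*n) → ℝ, v ≠ 0 ∧ (Jp p n).mulVec v = lam • v) ↔
    (∃ u : ℕ → ℝ, (∀ k, 2*n ≤ k → u k = 0) ∧ (∃ k, k < 2*n ∧ u k ≠ 0) ∧
      (∀ i, i < 2*n →
        (if i = 0 then 0 else bc p n (i-1) * u (i-1)) + bc p n i * u (i+1) = lam * u i)) := by
  constructor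
  · rintro ⟨v, hv0, hv⟩
    set u : ℕ → ℝ := fun k => if h : k < 2*n then v ⟨k, h⟩ else 0 with hudef
    have hu : ∀ j (h : j < 2*n), u j = v ⟨j, h⟩ := fun j h => dif_pos h
    have hu0 : ∀ j, 2*n ≤ j → u j = 0 := fun j h => dif_neg (by omega)
    refine ⟨u, hu0, ?_, ?_⟩
    · have : ∃ i, v i ≠ 0 := by
        by_contra hc
        push_neg at hc
        exact hv0 (funext fun i => hc i)
      obtain ⟨i, hi⟩ := this
      refine ⟨i.1, i.isLt, ?_⟩
      rw [hu i.1 i.isLt]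
      simpa using hi
    · intro i hi
      have hrs := congrFun hv ⟨i, hi⟩
      rw [row_sum] at hrs
      simp only [Pi.smul_apply, smul_eq_mul] at hrs
      rw [hu i hi]
      by_cases h0 : i = 0
      · subst h0
        rw [dif_neg (by omega)] at hrs
        rw [if_pos rfl]
        by_cases h1 : 0 + 1 < 2*n
        · rw [dif_pos h1] at hrs
          rw [hu (0+1) h1]
          exact hrs
        · rw [dif_neg h1] at hrs
          rw [hu0 (0+1) (by omega), mul_zero]
          exact hrs
      · rw [dif_pos (by omega)] at hrs
        rw [if_neg h0, hu (i-1) (by omega)]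
        by_cases h1 : i + 1 < 2*n
        · rw [dif_pos h1] at hrs
          rw [hu (i+1) h1]
          exact hrs
        · rw [dif_neg h1] at hrs
          rw [hu0 (i+1) (by omega), mul_zero]
          exact hrs
  · rintro ⟨u, hu0, ⟨k, hk, hknz⟩, hrow⟩
    refine ⟨fun i => u i.1, ?_, ?_⟩
    · intro hc
      exact hknz (by simpa using congrFun hc ⟨k, hk⟩)
    · funext i
      rw [row_sum]
      simp only [Pi.smul_apply, smul_eq_mul]
      have hrs := hrow i.1 i.isLt
      show _ = lam * u i.1
      rw [← hrs]
      by_cases h0 : (0:ℕ) < i.1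
      · rw [dif_pos h0, if_neg (by omega)]
        by_cases h1 : i.1 + 1 < 2*n
        · rw [dif_pos h1]
        · rw [dif_neg h1, hu0 (i.1+1) (by omega), mul_zero]
      · rw [dif_neg h0, if_pos (by omega)]
        by_cases h1 : i.1 + 1 < 2*n
        · rw [dif_pos h1]
        · rw [dif_neg h1, hu0 (i.1+1) (by omega), mul_zero]

lemma wv_succ (q x : ℝ) (k : ℕ) :
    wv q x (k+1) = (q * x * Ut k x - Ut' k x) / Real.sqrt q := rfl

lemma wv_zero (q x : ℝ) : wv q x 0 = 1 := rfl

lemma wvL0 (p q x : ℝ) (hp0 : 0 < p) (hq0 : 0 < q) :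
    Real.sqrt p * wv q x 1 = Real.sqrt p * Real.sqrt q * x := by
  have hQ : Real.sqrt q ≠ 0 := ne_of_gt (Real.sqrt_pos.mpr hq0)
  have hQ2 : q = Real.sqrt q ^ 2 := (Real.sq_sqrt hq0.le).symm
  rw [wv_succ]
  simp only [Ut, Ut', if_pos rfl, if_true]
  generalize hT : Real.sqrt q = T at *
  subst hQ2
  field_simp
  ring

lemma wvL1 (p q x : ℝ) (hp0 : 0 < p) (hq0 : 0 < q) :
    Real.sqrt p + (Real.sqrt p * Real.sqrt q) * wv q x 2
    = (Real.sqrt p * Real.sqrt q * x) * wv q x 1 := by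
  have hQ : Real.sqrt q ≠ 0 := ne_of_gt (Real.sqrt_pos.mpr hq0)
  have hQ2 : q = Real.sqrt q ^ 2 := (Real.sq_sqrt hq0.le).symm
  rw [wv_succ, wv_succ]
  have h1 : Ut' 1 x = 1 := by simp [Ut', Ut]
  rw [h1]
  simp only [Ut, Ut', if_pos rfl, if_true]
  generalize hT : Real.sqrt q = T at *
  subst hQ2
  field_simp
  ring

lemma wvrec (q x : ℝ) (hq0 : 0 < q) (k : ℕ) :
    wv q x (k+3) = x * wv q x (k+2) - wv q x (k+1) := by
  have hQ : Real.sqrt q ≠ 0 := ne_of_gt (Real.sqrt_pos.mpr hq0)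
  rw [wv_succ, wv_succ, wv_succ, Ut'_succ, Ut'_succ]
  have r3 : Ut (k+2) x = x * Ut (k+1) x - Ut k x := by simp [Ut]
  have r2 : Ut (k+1) x = x * Ut k x - Ut' k x := Ut_succ k x
  field_simp
  linear_combination (q*x) * r3 - r2

lemma wvkey (p q x ε : ℝ) (hp0 : 0 < p) (hq0 : 0 < q) (hpq : p + q = 1)
    (hε : ε = 1 ∨ ε = -1) (k : ℕ) :
    (Real.sqrt p * Real.sqrt q * x) * wv q x (k+2)
      - (Real.sqrt p * Real.sqrt q) * wv q x (k+1) - ε * q * wv q x (k+2)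
    = (Real.sqrt p * Real.sqrt q * x - ε)
        * (Real.sqrt q * Ut (k+2) x + ε * Real.sqrt p * Ut (k+1) x) := by
  have hQ : Real.sqrt q ≠ 0 := ne_of_gt (Real.sqrt_pos.mpr hq0)
  have hQ2 : q = Real.sqrt q ^ 2 := (Real.sq_sqrt hq0.le).symm
  have hP2 : p = Real.sqrt p ^ 2 := (Real.sq_sqrt hp0.le).symm
  have r3 : Ut (k+2) x = x * Ut (k+1) x - Ut k x := by simp [Ut]
  rw [wv_succ q x (k+1), wv_succ q x k, Ut'_succ, r3]
  generalize hS : Real.sqrt p = S at *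
  generalize hT : Real.sqrt q = T at *
  subst hP2
  subst hQ2
  linear_combination keyalg S T x (Ut k x) (Ut (k+1) x) (Ut' k x) ε hpq hQ hε (Ut_succ k x)

lemma wvkey2 (p q x ε : ℝ) (hp0 : 0 < p) (hq0 : 0 < q) (hpq : p + q = 1)
    (hε : ε = 1 ∨ ε = -1) :
    (Real.sqrt p * Real.sqrt q * x) * wv q x 1
      - Real.sqrt p - ε * q * wv q x 1
    = (Real.sqrt p * Real.sqrt q * x - ε)
        * (Real.sqrt q * Ut 1 x + ε * Real.sqrt p * Ut 0 x) := by
  have hQ : Real.sqrt q ≠ 0 := ne_of_gt (Real.sqrt_pos.mpr hq0)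
  have hQ2 : q = Real.sqrt q ^ 2 := (Real.sq_sqrt hq0.le).symm
  have hP2 : p = Real.sqrt p ^ 2 := (Real.sq_sqrt hp0.le).symm
  rw [wv_succ]
  simp only [Ut, Ut', if_pos rfl, if_true, sub_zero]
  generalize hS : Real.sqrt p = S at *
  generalize hT : Real.sqrt q = T at *
  subst hP2
  subst hQ2
  linear_combination keyalg2 S T x ε hpq hQ hε

/-- The eigenvalues of `J_{2n}(p)` other than `±1` are exactly the solutions of
`√q·Ũ_{n-1}(λ/√(pq)) ± √p·Ũ_{n-2}(λ/√(pq)) = 0`. -/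
theorem eigenvalues_ne_pm_one_iff
    (p q : ℝ) (hp : 0 < p) (hp1 : p < 1) (hq : q = 1 - p)
    (n : ℕ) (hn : 2 ≤ n) (lam : ℝ) (h1 : lam ≠ 1) (h2 : lam ≠ -1) :
    (∃ v : Fin (2*n) → ℝ, v ≠ 0 ∧ (Jp p n).mulVec v = lam • v) ↔
      (Real.sqrt q * Ut (n - 1) (lam / Real.sqrt (p*q))
          + Real.sqrt p * Ut (n - 2) (lam / Real.sqrt (p*q)) = 0 ∨
       Real.sqrt q * Ut (n - 1) (lam / Real.sqrt (p*q))
          - Real.sqrt p * Ut (n - 2) (lam / Real.sqrt (p*q)) = 0) := by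
  obtain ⟨m, rfl⟩ : ∃ m, n = m + 2 := ⟨n - 2, by omega⟩
  simp only [show m+2-1 = m+1 from by omega, show m+2-2 = m from by omega]
  have hq0 : 0 < q := by rw [hq]; linarith
  have hpq : p + q = 1 := by rw [hq]; ring
  set x := lam / Real.sqrt (p*q) with hxdef
  have KL0 := wvL0 p q x hp hq0
  have KL1 := wvL1 p q x hp hq0
  have Krec := wvrec q x hq0
  have Kkey : ∀ ε : ℝ, (ε = 1 ∨ ε = -1) → ∀ k : ℕ,
      (Real.sqrt p * Real.sqrt q * x) * wv q x (k+2)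
        - (Real.sqrt p * Real.sqrt q) * wv q x (k+1) - ε * q * wv q x (k+2)
      = (Real.sqrt p * Real.sqrt q * x - ε)
          * (Real.sqrt q * Ut (k+2) x + ε * Real.sqrt p * Ut (k+1) x) :=
    fun ε hε k => wvkey p q x ε hp hq0 hpq hε k
  have Kkey2 : ∀ ε : ℝ, (ε = 1 ∨ ε = -1) →
      (Real.sqrt p * Real.sqrt q * x) * wv q x 1
        - Real.sqrt p - ε * q * wv q x 1
      = (Real.sqrt p * Real.sqrt q * x - ε)
          * (Real.sqrt q * Ut 1 x + ε * Real.sqrt p * Ut 0 x) :=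
    fun ε hε => wvkey2 p q x ε hp hq0 hpq hε
  have hsqrtpq : Real.sqrt (p * q) = Real.sqrt p * Real.sqrt q := Real.sqrt_mul hp.le q
  set P := Real.sqrt p with hPdef
  set Q := Real.sqrt q with hQdef
  have hPpos : 0 < P := Real.sqrt_pos.mpr hp
  have hQpos : 0 < Q := Real.sqrt_pos.mpr hq0
  have hPne : P ≠ 0 := ne_of_gt hPpos
  have hQne : Q ≠ 0 := ne_of_gt hQpos
  have hPQne : P * Q ≠ 0 := mul_ne_zero hPne hQne
  have hlam : lam = P * Q * x := by
    rw [hxdef, hsqrtpq]; field_simp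
  have h22 : 2*(m+2)-2 = 2*m+2 := by omega
  have hbP : ∀ k : ℕ, (k = 0 ∨ k = 2*m+2) → bc p (m+2) k = P := by
    intro k hk; unfold bc; rw [h22, if_pos hk, hPdef]
  have hbq : bc p (m+2) (m+1) = q := by
    unfold bc; rw [h22, if_neg (by omega), if_pos (show m+1 = m+2-1 from by omega)]
    linarith
  have hbm : ∀ k : ℕ, k ≠ 0 → k ≠ 2*m+2 → k ≠ m+1 → bc p (m+2) k = P*Q := by
    intro k hk1 hk2 hk3; unfold bc
    rw [h22, if_neg (by omega), if_neg (show ¬ k = m+2-1 from by omega),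
      show (1:ℝ) - p = q from by linarith]
    exact hsqrtpq
  set C : ℝ := if m = 0 then P else P * Q with hC
  have hCne : C ≠ 0 := by
    rw [hC]; split
    · exact hPne
    · exact hPQne
  have hbCm : bc p (m+2) m = C := by
    rw [hC]; rcases Nat.eq_zero_or_pos m with rfl | hm
    · rw [if_pos rfl]; exact hbP 0 (Or.inl rfl)
    · rw [if_neg (by omega)]; exact hbm m (by omega) (by omega) (by omega)
  have hbCm2 : bc p (m+2) (m+2) = C := by
    rw [hC]; rcases Nat.eq_zero_or_pos m with rfl | hm
    · rw [if_pos rfl]; exact hbP 2 (Or.inr (by omega))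
    · rw [if_neg (by omega)]; exact hbm (m+2) (by omega) (by omega) (by omega)
  have hkeyC : ∀ ε : ℝ, (ε = 1 ∨ ε = -1) →
      lam * wv q x (m+1) - C * wv q x m - ε * q * wv q x (m+1)
        = (lam - ε) * (Q * Ut (m+1) x + ε * P * Ut m x) := by
    intro ε hε
    rcases Nat.eq_zero_or_pos m with rfl | hm
    · rw [hC, if_pos rfl, wv_zero, mul_one, hlam]
      simpa using Kkey2 ε hε
    · obtain ⟨j, rfl⟩ : ∃ j, m = j+1 := ⟨m-1, by omega⟩
      rw [hC, if_neg (by omega), hlam, show j+1+1 = j+2 from by omega]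
      exact Kkey ε hε j
  rw [eig_iff_scalar p lam (m+2) (by omega)]
  constructor
  · rintro ⟨u, hu0, ⟨k0, hk0, hk0nz⟩, hrow⟩
    have claimA : ∀ k, k ≤ m+1 → u k = u 0 * wv q x k := by
      intro k
      induction k using Nat.strong_induction_on with
      | _ k ih =>
        rcases k with _ | k
        · intro _; rw [wv_zero, mul_one]
        rcases k with _ | k
        · intro hk
          have h := hrow 0 (by omega)
          rw [if_pos rfl, hbP 0 (Or.inl rfl), show (0:ℕ)+1 = 1 from rfl, hlam] at h
          refine mul_left_cancel₀ hPne ?_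
          linear_combination h - u 0 * KL0
        rcases k with _ | k
        · intro hk
          have h := hrow 1 (by omega)
          rw [if_neg (by omega), show (1:ℕ)-1 = 0 from rfl, hbP 0 (Or.inl rfl),
            hbm 1 (by omega) (by omega) (by omega), show (1:ℕ)+1 = 2 from rfl,
            ih 1 (by omega) (by omega), hlam] at h
          refine mul_left_cancel₀ hPQne ?_
          linear_combination h - u 0 * KL1
        · intro hk
          have h := hrow (k+2) (by omega)
          rw [if_neg (by omega), show k+2-1 = k+1 from by omega,
            hbm (k+1) (by omega) (by omega) (by omega),
            hbm (k+2) (by omega) (by omega) (by omega),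
            show k+2+1 = k+3 from by omega,
            ih (k+1) (by omega) (by omega), ih (k+2) (by omega) (by omega), hlam] at h
          refine mul_left_cancel₀ hPQne ?_
          linear_combination h - (P*Q*u 0) * (Krec k)
    have claimB : ∀ k, k ≤ m+1 → u (2*m+3-k) = u (2*m+3) * wv q x k := by
      intro k
      induction k using Nat.strong_induction_on with
      | _ k ih =>
        rcases k with _ | k
        · intro _; rw [Nat.sub_zero, wv_zero, mul_one]
        rcases k with _ | k
        · intro hk
          have h := hrow (2*m+3) (by omega)
          rw [if_neg (by omega), show 2*m+3-1 = 2*m+2 from by omega,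
            hbP (2*m+2) (Or.inr rfl), hu0 (2*m+3+1) (by omega), mul_zero, add_zero,
            hlam] at h
          rw [show 2*m+3-1 = 2*m+2 from by omega]
          refine mul_left_cancel₀ hPne ?_
          linear_combination h - u (2*m+3) * KL0
        rcases k with _ | k
        · intro hk
          have h := hrow (2*m+2) (by omega)
          rw [if_neg (by omega), show 2*m+2-1 = 2*m+1 from by omega,
            hbm (2*m+1) (by omega) (by omega) (by omega),
            hbP (2*m+2) (Or.inr rfl), show 2*m+2+1 = 2*m+3 from by omega] at h
          have h1 := ih 1 (by omega) (by omega)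
          rw [show 2*m+3-1 = 2*m+2 from by omega] at h1
          rw [h1, hlam] at h
          rw [show 2*m+3-2 = 2*m+1 from by omega]
          refine mul_left_cancel₀ hPQne ?_
          linear_combination h - u (2*m+3) * KL1
        · intro hk
          have h := hrow (2*m+1-k) (by omega)
          rw [if_neg (by omega), show 2*m+1-k-1 = 2*m-k from by omega,
            hbm (2*m-k) (by omega) (by omega) (by omega),
            hbm (2*m+1-k) (by omega) (by omega) (by omega),
            show 2*m+1-k+1 = 2*m+3-(k+1) from by omega,
            show 2*m+1-k = 2*m+3-(k+2) from by omega,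
            ih (k+1) (by omega) (by omega), ih (k+2) (by omega) (by omega), hlam] at h
          rw [show 2*m+3-(k+3) = 2*m-k from by omega]
          refine mul_left_cancel₀ hPQne ?_
          linear_combination h - (P*Q*u (2*m+3)) * (Krec k)
    have hA := hrow (m+1) (by omega)
    rw [if_neg (by omega), show m+1-1 = m from by omega, hbCm, hbq,
      show m+1+1 = m+2 from by omega] at hA
    have hB := hrow (m+2) (by omega)
    rw [if_neg (by omega), show m+2-1 = m+1 from by omega, hbq, hbCm2,
      show m+2+1 = m+3 from by omega] at hB
    have eA0 := claimA m (by omega)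
    have eA1 := claimA (m+1) (by omega)
    have eB1 := claimB (m+1) (by omega)
    rw [show 2*m+3-(m+1) = m+2 from by omega] at eB1
    have eB0 := claimB m (by omega)
    rw [show 2*m+3-m = m+3 from by omega] at eB0
    rw [eA0, eA1, eB1] at hA
    rw [eA1, eB1, eB0] at hB
    have K1 := hkeyC 1 (Or.inl rfl)
    have K2 := hkeyC (-1) (Or.inr rfl)
    have hDD : (lam * wv q x (m+1) - C * wv q x m)^2 - (q * wv q x (m+1))^2
        = ((lam - 1) * (Q * Ut (m+1) x + P * Ut m x))
          * ((lam + 1) * (Q * Ut (m+1) x - P * Ut m x)) := by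
      linear_combination (lam * wv q x (m+1) - C * wv q x m + q * wv q x (m+1)) * K1
        + ((lam - 1) * (Q * Ut (m+1) x + 1 * P * Ut m x)) * K2
    have hAzero : u 0 * ((lam * wv q x (m+1) - C * wv q x m)^2 - (q * wv q x (m+1))^2) = 0 := by
      linear_combination (C * wv q x m - lam * wv q x (m+1)) * hA + (-(q * wv q x (m+1))) * hB
    have hBzero : u (2*m+3) * ((lam * wv q x (m+1) - C * wv q x m)^2 - (q * wv q x (m+1))^2) = 0 := by
      linear_combination (C * wv q x m - lam * wv q x (m+1)) * hB + (-(q * wv q x (m+1))) * hA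
    by_cases hD0 : (lam * wv q x (m+1) - C * wv q x m)^2 - (q * wv q x (m+1))^2 = 0
    · rw [hD0] at hDD
      rcases mul_eq_zero.mp hDD.symm with hT | hT
      · left
        rcases mul_eq_zero.mp hT with h | h
        · exact absurd (by linarith : lam = 1) h1
        · exact h
      · right
        rcases mul_eq_zero.mp hT with h | h
        · exact absurd (by linarith : lam = -1) h2
        · exact h
    · have hA0 : u 0 = 0 := by
        rcases mul_eq_zero.mp hAzero with h | h
        · exact h
        · exact absurd h hD0
      have hB0 : u (2*m+3) = 0 := by
        rcases mul_eq_zero.mp hBzero with h | h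
        · exact h
        · exact absurd h hD0
      exfalso
      apply hk0nz
      rcases Nat.lt_or_ge k0 (m+2) with hk | hk
      · rw [claimA k0 (by omega), hA0, zero_mul]
      · have hc := claimB (2*m+3-k0) (by omega)
        rw [show 2*m+3-(2*m+3-k0) = k0 from by omega] at hc
        rw [hc, hB0, zero_mul]
  · intro hT
    obtain ⟨ε, hε, hTe⟩ : ∃ ε : ℝ, (ε = 1 ∨ ε = -1) ∧ Q * Ut (m+1) x + ε * P * Ut m x = 0 := by
      rcases hT with h | h
      · exact ⟨1, Or.inl rfl, by linear_combination h⟩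
      · exact ⟨-1, Or.inr rfl, by linear_combination h⟩
    have hε2 : ε^2 = 1 := by rcases hε with rfl | rfl <;> norm_num
    have hKey : lam * wv q x (m+1) - C * wv q x m - ε * q * wv q x (m+1) = 0 := by
      rw [hkeyC ε hε, hTe, mul_zero]
    set u : ℕ → ℝ := fun j => if j ≤ m+1 then wv q x j
      else if j ≤ 2*m+3 then ε * wv q x (2*m+3-j) else 0 with hudef
    have hu1 : ∀ j, j ≤ m+1 → u j = wv q x j := by
      intro j hj; rw [hudef]; exact if_pos hj
    have hu2 : ∀ j, m+1 < j → j ≤ 2*m+3 → u j = ε * wv q x (2*m+3-j) := by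
      intro j hj1 hj2; rw [hudef]
      exact (if_neg (by omega)).trans (if_pos hj2)
    have hu3 : ∀ j, 2*m+3 < j → u j = 0 := by
      intro j hj; rw [hudef]
      exact (if_neg (by omega)).trans (if_neg (by omega))
    refine ⟨u, ?_, ?_, ?_⟩
    · intro k hk; exact hu3 k (by omega)
    · refine ⟨0, by omega, ?_⟩
      rw [hu1 0 (by omega), wv_zero]; exact one_ne_zero
    · intro i hi
      by_cases hi0 : i = 0
      · subst hi0
        rw [if_pos rfl, hbP 0 (Or.inl rfl), show (0:ℕ)+1 = 1 from rfl,
          hu1 1 (by omega), hu1 0 (by omega), wv_zero, hlam]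
        linear_combination KL0
      by_cases him1 : i = m+1
      · subst him1
        rw [if_neg (by omega), show m+1-1 = m from by omega, hbCm, hbq,
          show m+1+1 = m+2 from by omega, hu1 m (by omega), hu1 (m+1) (by omega),
          hu2 (m+2) (by omega) (by omega), show 2*m+3-(m+2) = m+1 from by omega]
        linear_combination (-1 : ℝ) * hKey
      by_cases him2 : i = m+2
      · subst him2
        rw [if_neg (by omega), show m+2-1 = m+1 from by omega, hbq, hbCm2,
          show m+2+1 = m+3 from by omega, hu1 (m+1) (by omega),
          hu2 (m+2) (by omega) (by omega), show 2*m+3-(m+2) = m+1 from by omega,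
          hu2 (m+3) (by omega) (by omega), show 2*m+3-(m+3) = m from by omega]
        linear_combination (-ε) * hKey + (-(q * wv q x (m+1))) * hε2
      by_cases hilast : i = 2*m+3
      · subst hilast
        rw [if_neg (by omega), show 2*m+3-1 = 2*m+2 from by omega,
          hbP (2*m+2) (Or.inr rfl), hu2 (2*m+2) (by omega) (by omega),
          show 2*m+3-(2*m+2) = 1 from by omega, hu3 (2*m+3+1) (by omega),
          hu2 (2*m+3) (by omega) (by omega), show 2*m+3-(2*m+3) = 0 from by omega,
          wv_zero, hlam]
        linear_combination ε * KL0
      by_cases hleft : i < m+2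
      · by_cases hi1 : i = 1
        · subst hi1
          rw [if_neg (by omega), show (1:ℕ)-1 = 0 from rfl, hbP 0 (Or.inl rfl),
            hbm 1 (by omega) (by omega) (by omega), show (1:ℕ)+1 = 2 from rfl,
            hu1 0 (by omega), hu1 1 (by omega), hu1 2 (by omega), wv_zero, hlam]
          linear_combination KL1
        · obtain ⟨j, rfl⟩ : ∃ j, i = j+2 := ⟨i-2, by omega⟩
          rw [if_neg (by omega), show j+2-1 = j+1 from by omega,
            hbm (j+1) (by omega) (by omega) (by omega),
            hbm (j+2) (by omega) (by omega) (by omega),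
            show j+2+1 = j+3 from by omega,
            hu1 (j+1) (by omega), hu1 (j+3) (by omega), hu1 (j+2) (by omega), hlam]
          linear_combination (P*Q) * Krec j
      · by_cases hi2 : i = 2*m+2
        · subst hi2
          rw [if_neg (by omega), show 2*m+2-1 = 2*m+1 from by omega,
            hbm (2*m+1) (by omega) (by omega) (by omega),
            hbP (2*m+2) (Or.inr rfl), show 2*m+2+1 = 2*m+3 from by omega,
            hu2 (2*m+1) (by omega) (by omega), show 2*m+3-(2*m+1) = 2 from by omega,
            hu2 (2*m+3) (by omega) (by omega), show 2*m+3-(2*m+3) = 0 from by omega,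
            wv_zero, hu2 (2*m+2) (by omega) (by omega),
            show 2*m+3-(2*m+2) = 1 from by omega, hlam]
          linear_combination ε * KL1
        · obtain ⟨j, rfl⟩ : ∃ j, i = m+3+j := ⟨i-(m+3), by omega⟩
          obtain ⟨t, ht⟩ : ∃ t, m = j+2+t := ⟨m-j-2, by omega⟩
          rw [if_neg (by omega), show m+3+j-1 = m+2+j from by omega,
            hbm (m+2+j) (by omega) (by omega) (by omega),
            hbm (m+3+j) (by omega) (by omega) (by omega),
            hu2 (m+2+j) (by omega) (by omega),
            show 2*m+3-(m+2+j) = t+3 from by omega,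
            show m+3+j+1 = m+4+j from by omega,
            hu2 (m+4+j) (by omega) (by omega),
            show 2*m+3-(m+4+j) = t+1 from by omega,
            hu2 (m+3+j) (by omega) (by omega),
            show 2*m+3-(m+3+j) = t+2 from by omega, hlam]
          linear_combination (P*Q*ε) * Krec t
end
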